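/- The 'jeu-de-bumping' straightening process terminates: starting from any 2-row array with strictly increasing rows whose entries partition {1,...,2n}, repeatedly applying the move (find smallest i with top entry c_i > bottom entry d_i, then form the new array with top row d_1,...,d_{i-1}, d_i, c_i, c_{i+1},...,c_r and bottom row c_1,...,c_{i-1}, d_{i+1},...,d_s) terminates in finitely many steps at a standard Young tableau with at most two rows and 2n cells. -/

import Mathlib

/-- The hook-shaped Young diagram `(k+1, 1^(n-k))`, a partition of `n+1` (for `k ≤ n`). -/
def hookDiagram (n k : ℕ) : YoungDiagram :=
  YoungDiagram.ofRowLens ((k + 1) :: List.replicate (n - k) 1) (by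
    refine List.sortedGE_iff_pairwise.mpr (List.pairwise_cons.mpr ⟨?_, ?_⟩)
    · intro b hb
      rw [List.eq_of_mem_replicate hb]
      omega
    · rw [List.pairwise_replicate]
      right; rfl)

/-- The Young diagram `(k+2, 1^(n-k))`, obtained from the hook `(k+1, 1^(n-k))` by adding one
cell to its first row. -/
def hookPlusDiagram (n k : ℕ) : YoungDiagram :=
  YoungDiagram.ofRowLens ((k + 2) :: List.replicate (n - k) 1) (by
    refine List.sortedGE_iff_pairwise.mpr (List.pairwise_cons.mpr ⟨?_, ?_⟩)
    · intro b hb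
      rw [List.eq_of_mem_replicate hb]
      omega
    · rw [List.pairwise_replicate]
      right; rfl)

/-- The two-row Young diagram with rows `max a b ≥ min a b`. -/
def twoRowDiagram (a b : ℕ) : YoungDiagram :=
  YoungDiagram.ofRowLens [max a b, min a b] (by
    refine List.sortedGE_iff_pairwise.mpr (List.pairwise_cons.mpr ⟨?_, List.pairwise_singleton _ _⟩)
    intro c hc
    simp at hc
    omega)

/-- A standard Young tableau of shape `μ`: a filling of the cells of `μ` with the numbers
`1, …, |μ|`, each used exactly once, strictly increasing along rows and down columns. -/
structure SYT (μ : YoungDiagram) where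
  entry : ℕ × ℕ → ℕ
  bijOn : Set.BijOn entry ↑μ.cells (Set.Icc 1 μ.card)
  row_strict : ∀ i j1 j2, j1 < j2 → (i, j2) ∈ μ → entry (i, j1) < entry (i, j2)
  col_strict : ∀ i1 i2 j, i1 < i2 → (i2, j) ∈ μ → entry (i1, j) < entry (i2, j)

/-- A `2 × n` row-increasing matrix: two strictly increasing rows whose entries are
exactly `{1, …, 2n}`. -/
structure RowIncMatrix (n : ℕ) where
  a : Fin n → ℕ
  b : Fin n → ℕ
  ha : StrictMono a
  hb : StrictMono b
  disj : Disjoint (Finset.univ.image a) (Finset.univ.image b)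
  cover : Finset.univ.image a ∪ Finset.univ.image b = Finset.Icc 1 (2 * n)
/-- A 2-row array of shape `(r, s)` with `s ≤ r`, `r + s = N`: strictly increasing rows
whose entries together are exactly `{1, …, N}`. -/
structure TwoRowArray (N : ℕ) where
  r : ℕ
  s : ℕ
  hrs : s ≤ r
  hsum : r + s = N
  c : Fin r → ℕ
  d : Fin s → ℕ
  hc : StrictMono c
  hd : StrictMono d
  disj : Disjoint (Finset.univ.image c) (Finset.univ.image d)
  cover : Finset.univ.image c ∪ Finset.univ.image d = Finset.Icc 1 N

/-- A 2-row array is a standard Young tableau when every column increases downwards,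
i.e. `c_j < d_j` for all `j` in the bottom row. -/
def TwoRowArray.IsStandard {N : ℕ} (M : TwoRowArray N) : Prop :=
  ∀ j : Fin M.s, M.c (j.castLE M.hrs) < M.d j

/-- One step of the straightening ('jeu-de-bumping') process: find the smallest `i` with
`c_i > d_i`, and replace the array by the one with top row
`d_1, …, d_{i-1}, d_i, c_i, c_{i+1}, …, c_r` and bottom row
`c_1, …, c_{i-1}, d_{i+1}, …, d_s`. -/
def MoveRel {N : ℕ} (M M' : TwoRowArray N) : Prop :=
  ∃ i : Fin M.s,
    (∀ j : Fin M.s, (j : ℕ) < (i : ℕ) → M.c (j.castLE M.hrs) < M.d j) ∧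
    M.d i < M.c (i.castLE M.hrs) ∧
    ∃ hr' : M'.r = M.r + 1, ∃ hs' : M'.s = M.s - 1,
      (∀ j : Fin M'.r, ∀ h : (j : ℕ) ≤ (i : ℕ),
        M'.c j = M.d ⟨j, lt_of_le_of_lt h i.2⟩) ∧
      (∀ j : Fin M'.r, ∀ h : (i : ℕ) < (j : ℕ),
        M'.c j = M.c ⟨(j : ℕ) - 1, by have := j.2; omega⟩) ∧
      (∀ j : Fin M'.s, ∀ h : (j : ℕ) < (i : ℕ),
        M'.d j = M.c ⟨j, by have := i.2; have := M.hrs; omega⟩) ∧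
      (∀ j : Fin M'.s, ∀ h : (i : ℕ) ≤ (j : ℕ),
        M'.d j = M.d ⟨(j : ℕ) + 1, by have := j.2; omega⟩)
lemma TwoRowArray.exists_move {N : ℕ} (M : TwoRowArray N) (h : ¬ M.IsStandard) :
    ∃ M' : TwoRowArray N, M'.s = M.s - 1 ∧ MoveRel M M' := by
  classical
  have hne : ∀ (x : Fin M.r) (y : Fin M.s), M.c x ≠ M.d y := by
    intro x y hxy
    exact Finset.disjoint_left.mp M.disj
      (Finset.mem_image_of_mem _ (Finset.mem_univ x))
      (hxy ▸ Finset.mem_image_of_mem _ (Finset.mem_univ y))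
  have hP : ∃ k, ∃ hk : k < M.s, M.d ⟨k, hk⟩ < M.c ⟨k, hk.trans_le M.hrs⟩ := by
    rw [TwoRowArray.IsStandard] at h
    push_neg at h
    obtain ⟨j, hj⟩ := h
    exact ⟨j, j.2, lt_of_le_of_ne hj (fun e => hne _ _ e.symm)⟩
  obtain ⟨hi, hvio⟩ := Nat.find_spec hP
  set i := Nat.find hP with hidef
  have hmin : ∀ k (hk : k < M.s), k < i → M.c ⟨k, hk.trans_le M.hrs⟩ < M.d ⟨k, hk⟩ := by
    intro k hk hki
    have h1 := Nat.find_min hP hki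
    push_neg at h1
    exact lt_of_le_of_ne (h1 hk) (hne _ _)
  have hrs := M.hrs
  have hsum := M.hsum
  set c' : Fin (M.r + 1) → ℕ := fun j =>
    if hj : (j : ℕ) ≤ i then M.d ⟨j, by omega⟩
    else M.c ⟨(j : ℕ) - 1, by have := j.2; omega⟩ with hc'def
  set d' : Fin (M.s - 1) → ℕ := fun j =>
    if hj : (j : ℕ) < i then M.c ⟨j, by omega⟩
    else M.d ⟨(j : ℕ) + 1, by have := j.2; omega⟩ with hd'def
  have hc' : StrictMono c' := by
    intro j k hjk
    have hjk' : (j : ℕ) < (k : ℕ) := hjk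
    simp only [hc'def]
    split_ifs with h1 h2 h2
    · exact M.hd (Fin.mk_lt_mk.mpr hjk')
    · refine lt_of_le_of_lt (M.hd.monotone (Fin.mk_le_mk.mpr h1))
        (lt_of_lt_of_le hvio (M.hc.monotone (Fin.mk_le_mk.mpr (by omega))))
    · omega
    · exact M.hc (Fin.mk_lt_mk.mpr (by omega))
  have hd' : StrictMono d' := by
    intro j k hjk
    have hjk' : (j : ℕ) < (k : ℕ) := hjk
    simp only [hd'def]
    split_ifs with h1 h2 h2
    · exact M.hc (Fin.mk_lt_mk.mpr hjk')
    · exact lt_of_lt_of_le (hmin j (by omega) h1) (M.hd.monotone (Fin.mk_le_mk.mpr (by omega)))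
    · omega
    · exact M.hd (Fin.mk_lt_mk.mpr (by omega))
  have hdisj : Disjoint (Finset.univ.image c') (Finset.univ.image d') := by
    rw [Finset.disjoint_left]
    rintro x hx hx'
    simp only [Finset.mem_image, Finset.mem_univ, true_and] at hx hx'
    obtain ⟨j, hj⟩ := hx
    obtain ⟨k, hk⟩ := hx'
    simp only [hc'def] at hj
    simp only [hd'def] at hk
    split_ifs at hj hk with h1 h2 h2
    · exact hne _ _ (hk.trans hj.symm)
    · have := M.hd.injective (hj.trans hk.symm)
      rw [Fin.mk.injEq] at this
      omega
    · have := M.hc.injective (hj.trans hk.symm)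
      rw [Fin.mk.injEq] at this
      omega
    · exact hne _ _ (hj.trans hk.symm)
  have hcover : Finset.univ.image c' ∪ Finset.univ.image d' = Finset.Icc 1 N := by
    apply Finset.eq_of_subset_of_card_le
    · intro x hx
      rw [← M.cover]
      simp only [Finset.mem_union, Finset.mem_image, Finset.mem_univ, true_and] at hx ⊢
      obtain ⟨j, hj⟩ | ⟨j, hj⟩ := hx
      · simp only [hc'def] at hj
        split_ifs at hj with h1
        · exact Or.inr ⟨_, hj⟩
        · exact Or.inl ⟨_, hj⟩
      · simp only [hd'def] at hj
        split_ifs at hj with h1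
        · exact Or.inl ⟨_, hj⟩
        · exact Or.inr ⟨_, hj⟩
    · rw [Finset.card_union_of_disjoint hdisj,
        Finset.card_image_of_injective _ hc'.injective,
        Finset.card_image_of_injective _ hd'.injective,
        Finset.card_univ, Finset.card_univ, Fintype.card_fin, Fintype.card_fin,
        Nat.card_Icc]
      omega
  refine ⟨⟨M.r + 1, M.s - 1, by omega, by omega, c', d', hc', hd', hdisj, hcover⟩,
    rfl, ⟨i, hi⟩, ?_, hvio, rfl, rfl, ?_, ?_, ?_, ?_⟩
  · intro j hj
    exact hmin j j.2 hj
  · intro j hj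
    simp only [hc'def]
    rw [dif_pos hj]
  · intro j hj
    simp only [hc'def]
    rw [dif_neg (by simp only [Fin.val_mk] at hj; omega)]
  · intro j hj
    simp only [hd'def]
    rw [dif_pos hj]
  · intro j hj
    simp only [hd'def]
    rw [dif_neg (by simp only [Fin.val_mk] at hj; omega)]

lemma straightening_aux (N : ℕ) : ∀ k (M : TwoRowArray N), M.s ≤ k →
    ∃ (m : ℕ) (f : Fin (m + 1) → TwoRowArray N),
      f 0 = M ∧ (∀ i : Fin m, MoveRel (f i.castSucc) (f i.succ)) ∧
      (f (Fin.last m)).IsStandard := by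
  intro k
  induction k with
  | zero =>
    intro M hM
    refine ⟨0, fun _ => M, rfl, fun i => i.elim0, ?_⟩
    intro j
    have := j.2
    simp only at this
    omega
  | succ k ih =>
    intro M hM
    by_cases hstd : M.IsStandard
    · exact ⟨0, fun _ => M, rfl, fun i => i.elim0, hstd⟩
    · obtain ⟨M', hs', hmv⟩ := M.exists_move hstd
      have hspos : 0 < M.s := by
        by_contra h
        exact hstd fun j => absurd j.2 (by omega)
      obtain ⟨m, f, hf0, hchain, hlast⟩ := ih M' (by omega)
      refine ⟨m + 1, Fin.cases M f, Fin.cases_zero, ?_, ?_⟩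
      · intro i
        rcases i with ⟨iv, hiv⟩
        match iv, hiv with
        | 0, hiv =>
          show MoveRel (Fin.cases M f (Fin.castSucc ⟨0, hiv⟩)) (Fin.cases M f (Fin.succ ⟨0, hiv⟩))
          rw [Fin.castSucc_mk, Fin.succ_mk, Fin.mk_zero, Fin.cases_zero, Fin.cases_succ']
          have : (⟨0, by omega⟩ : Fin (m + 1)) = 0 := Fin.mk_zero
          rw [this, hf0]
          exact hmv
        | jv + 1, hiv =>
          show MoveRel (Fin.cases M f (Fin.castSucc ⟨jv + 1, hiv⟩))
            (Fin.cases M f (Fin.succ ⟨jv + 1, hiv⟩))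
          rw [Fin.castSucc_mk, Fin.succ_mk, Fin.cases_succ', Fin.cases_succ']
          have h1 := hchain ⟨jv, by omega⟩
          rwa [Fin.castSucc_mk, Fin.succ_mk] at h1
      · rw [← Fin.succ_last]
        simp only [Fin.cases_succ]
        exact hlast


/-- The straightening process terminates: from any 2-row array with entries `{1, …, 2n}`,
finitely many bumping moves reach a standard Young tableau with at most two rows. -/
theorem straightening_terminates (n : ℕ) (M₀ : TwoRowArray (2 * n)) :
    ∃ (m : ℕ) (f : Fin (m + 1) → TwoRowArray (2 * n)),
      f 0 = M₀ ∧
      (∀ i : Fin m, MoveRel (f i.castSucc) (f i.succ)) ∧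
      (f (Fin.last m)).IsStandard := by
  exact straightening_aux (2 * n) M₀.s M₀ le_rfl
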